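/- arXiv:2312.04032 — 4 statements merged into one kernel-verified Lean document; each statement's English description precedes it below -/
import Mathlib

section
/- Let (Ω, P) be a probability space and k a positive natural number. For each i ∈ Fin k, let gᵢ : Ω → ℝ be a square-integrable random variable with E[gᵢ] = μᵢ and Var[gᵢ] = σ²/B for a real σ ≥ 0 and positive natural number B (batch size), and let mᵢ : Ω → ℝ be a random variable taking values in {0,1} with P(mᵢ = 1) = p for a real 0 < p ≤ 1. Assume the family {g₁, …, g_k, m₁, …, m_k} is mutually independent, and let η ∈ ℝ. Define Δθᵢ := −η·(mᵢ/p)·gᵢ. Then Var[Δθᵢ] = η²σ²/(pB) + ((1 − p)/p)·η²·μᵢ² for every i, and Cov(Δθᵢ, Δθⱼ) = 0 for i ≠ j; i.e., the covariance matrix of the update Δθ equals (η²σ²/(pB))·I + ((1 − p)η²/p)·diag(μ₁², …, μ_k²). -/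
open MeasureTheory ProbabilityTheory

/-- The covariance `Cov(X,Y) = E[XY] - E[X]E[Y]`. -/
noncomputable def cov {Ω : Type*} [MeasurableSpace Ω] (μ : Measure Ω) (X Y : Ω → ℝ) : ℝ :=
  (∫ ω, X ω * Y ω ∂μ) - (∫ ω, X ω ∂μ) * (∫ ω, Y ω ∂μ)

/-- The variance `Var[X] = E[X²] - (E[X])²`. -/
noncomputable def var {Ω : Type*} [MeasurableSpace Ω] (μ : Measure Ω) (X : Ω → ℝ) : ℝ :=
  (∫ ω, X ω ^ 2 ∂μ) - (∫ ω, X ω ∂μ) ^ 2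

/-- Covariance structure of the masked SGD update (Theorem of Xu et al. 2021): with
gradient coordinates `gᵢ` of mean `μᵢ` and variance `σ²/B`, mutually independent
Bernoulli masks `mᵢ` of parameter `p > 0` (the whole family `{gᵢ} ∪ {mᵢ}` being mutually
independent) and update `Δθᵢ = -η (mᵢ/p) gᵢ`, each coordinate has variance
`η²σ²/(pB) + ((1-p)/p) η² μᵢ²` and distinct coordinates are uncorrelated. -/
theorem masked_update_covariance {Ω : Type*} [MeasurableSpace Ω]
    (μ : Measure Ω) [IsProbabilityMeasure μ]
    (k : ℕ) (hk : 0 < k) (g m : Fin k → Ω → ℝ)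
    (μv : Fin k → ℝ) (σ : ℝ) (hσ : 0 ≤ σ) (B : ℕ) (hB : 0 < B)
    (p : ℝ) (hp0 : 0 < p) (hp1 : p ≤ 1)
    (hgm : ∀ i, Measurable (g i)) (hg : ∀ i, MemLp (g i) 2 μ)
    (hgmean : ∀ i, ∫ ω, g i ω ∂μ = μv i)
    (hgvar : ∀ i, var μ (g i) = σ ^ 2 / (B : ℝ))
    (hmm : ∀ i, Measurable (m i))
    (hm01 : ∀ i ω, m i ω = 0 ∨ m i ω = 1)
    (hmp : ∀ i, μ {ω | m i ω = 1} = ENNReal.ofReal p)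
    (hind : iIndepFun (m := fun _ : Fin k ⊕ Fin k => Real.measurableSpace)
      (Sum.elim g m) μ)
    (η : ℝ) (Δθ : Fin k → Ω → ℝ)
    (hΔθ : ∀ i ω, Δθ i ω = -η * ((m i ω / p) * g i ω)) :
    (∀ i, var μ (Δθ i) = η ^ 2 * σ ^ 2 / (p * (B : ℝ)) + ((1 - p) / p) * η ^ 2 * (μv i) ^ 2)
      ∧ (∀ i j, i ≠ j → cov μ (Δθ i) (Δθ j) = 0) := by
  -- expectation of the mask
  have Em : ∀ i, ∫ ω, m i ω ∂μ = p := by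
    intro i
    have hs : MeasurableSet {ω | m i ω = 1} := hmm i (measurableSet_singleton 1)
    have hrepr : m i = Set.indicator {ω | m i ω = 1} 1 := by
      funext ω
      rcases hm01 i ω with h | h <;> simp [Set.indicator, h, Set.mem_setOf_eq]
    rw [hrepr, integral_indicator_one hs, measureReal_def, hmp i, ENNReal.toReal_ofReal hp0.le]
  have hmsq : ∀ i ω, m i ω ^ 2 = m i ω := by
    intro i ω; rcases hm01 i ω with h | h <;> simp [h]
  -- independence of each mask from each gradient coordinate
  have hind_mg : ∀ i j : Fin k, IndepFun (m i) (g j) μ := by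
    intro i j
    have := hind.indepFun (i := Sum.inr i) (j := Sum.inl j) (by simp)
    simpa using this
  have hind_mg2 : ∀ i : Fin k, IndepFun (m i) (fun ω => g i ω ^ 2) μ := by
    intro i
    have := (hind_mg i i).comp (measurable_id) (measurable_id.pow_const 2)
    exact this
  have Emg : ∀ i j : Fin k, ∫ ω, m i ω * g j ω ∂μ = p * μv j := by
    intro i j
    have h := (hind_mg i j).integral_mul_eq_mul_integral (hmm i).aestronglyMeasurable
      (hgm j).aestronglyMeasurable
    calc ∫ ω, m i ω * g j ω ∂μ = ∫ ω, (m i * g j) ω ∂μ := rfl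
      _ = (∫ ω, m i ω ∂μ) * ∫ ω, g j ω ∂μ := h
      _ = p * μv j := by rw [Em i, hgmean j]
  have Eg2 : ∀ i, ∫ ω, g i ω ^ 2 ∂μ = σ ^ 2 / (B : ℝ) + μv i ^ 2 := by
    intro i
    have h := hgvar i
    rw [var, hgmean i] at h
    linarith
  have Emg2 : ∀ i, ∫ ω, m i ω * g i ω ^ 2 ∂μ = p * (σ ^ 2 / (B : ℝ) + μv i ^ 2) := by
    intro i
    have h := (hind_mg2 i).integral_mul_eq_mul_integral (hmm i).aestronglyMeasurable
      ((hgm i).pow_const 2).aestronglyMeasurable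
    calc ∫ ω, m i ω * g i ω ^ 2 ∂μ = ∫ ω, (m i * fun ω => g i ω ^ 2) ω ∂μ := rfl
      _ = (∫ ω, m i ω ∂μ) * ∫ ω, g i ω ^ 2 ∂μ := h
      _ = p * (σ ^ 2 / (B : ℝ) + μv i ^ 2) := by rw [Em i, Eg2 i]
  -- expectation of the update
  have EΔ : ∀ i, ∫ ω, Δθ i ω ∂μ = -η * μv i := by
    intro i
    have hrw : ∀ ω, Δθ i ω = (-η / p) * (m i ω * g i ω) := by
      intro ω; rw [hΔθ i ω]; field_simp
    simp_rw [hrw]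
    rw [integral_const_mul, Emg i i]
    field_simp
  have hp' : p ≠ 0 := hp0.ne'
  constructor
  · intro i
    have hsq : ∀ ω, Δθ i ω ^ 2 = (η ^ 2 / p ^ 2) * (m i ω * g i ω ^ 2) := by
      intro ω
      have h1 : Δθ i ω ^ 2 = (η ^ 2 / p ^ 2) * (m i ω ^ 2 * g i ω ^ 2) := by
        rw [hΔθ i ω]; field_simp
      rw [h1, hmsq i ω]
    have hE2 : ∫ ω, Δθ i ω ^ 2 ∂μ
        = (η ^ 2 / p) * (σ ^ 2 / (B : ℝ) + μv i ^ 2) := by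
      simp_rw [hsq]
      rw [integral_const_mul, Emg2 i]
      field_simp
    rw [var, hE2, EΔ i]
    have hBne : (B : ℝ) ≠ 0 := Nat.cast_ne_zero.mpr hB.ne'
    field_simp
    ring
  · intro i j hij
    have hprod : ∀ ω, Δθ i ω * Δθ j ω
        = (η ^ 2 / p ^ 2) * ((m i ω * g i ω) * (m j ω * g j ω)) := by
      intro ω; rw [hΔθ i ω, hΔθ j ω]; field_simp
    have hmeas' : ∀ s : Fin k ⊕ Fin k, Measurable (Sum.elim g m s) := by
      rintro (s | s)
      · exact hgm s
      · exact hmm s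
    have hindep2 : IndepFun (fun ω => m i ω * g i ω) (fun ω => m j ω * g j ω) μ := by
      have := hind.indepFun_mul_mul hmeas' (Sum.inr i) (Sum.inl i) (Sum.inr j) (Sum.inl j)
        (by simpa using hij) (by simp) (by simp) (by simpa using hij)
      exact this
    have hEprod : ∫ ω, (m i ω * g i ω) * (m j ω * g j ω) ∂μ = (p * μv i) * (p * μv j) := by
      have h := hindep2.integral_mul_eq_mul_integral ((hmm i).mul (hgm i)).aestronglyMeasurable
        ((hmm j).mul (hgm j)).aestronglyMeasurable
      calc ∫ ω, (m i ω * g i ω) * (m j ω * g j ω) ∂μ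
          = ∫ ω, ((fun ω => m i ω * g i ω) * fun ω => m j ω * g j ω) ω ∂μ := rfl
        _ = (∫ ω, m i ω * g i ω ∂μ) * ∫ ω, m j ω * g j ω ∂μ := h
        _ = (p * μv i) * (p * μv j) := by rw [Emg i i, Emg j j]
    rw [cov]
    simp_rw [hprod]
    rw [integral_const_mul, hEprod, EΔ i, EΔ j]
    field_simp
    ring
end

section
/- Let (Ω, P) be a probability space, let g : Ω → ℝ be a square-integrable random variable with Var[g] = σ²/B for a real σ ≥ 0 and positive natural number B, and let m : Ω → ℝ be a random variable taking values in {0,1} with P(m = 1) = p for a real 0 < p ≤ 1, independent of g. Let p̂ be a real with 0 < p̂ ≤ p. Then the scaled masked gradient g̃ := (m/p)·g satisfies Var[g̃] ≤ σ²/(p̂·B) + ((1 − p̂)/p̂)·(E[g])². -/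
open MeasureTheory ProbabilityTheory

/-- Componentwise covariance bound of the paper's Corollary: if `g` has variance
`σ²/B` and `m` is an independent Bernoulli mask with parameter `p ≥ p̂ > 0`, then
`Var[(m/p) g] ≤ σ²/(p̂ B) + ((1-p̂)/p̂) (E[g])²`. -/
theorem masked_gradient_variance_bound {Ω : Type*} [MeasurableSpace Ω]
    (μ : Measure Ω) [IsProbabilityMeasure μ]
    (g m : Ω → ℝ) (σ : ℝ) (hσ : 0 ≤ σ) (B : ℕ) (hB : 0 < B)
    (p : ℝ) (hp0 : 0 < p) (hp1 : p ≤ 1)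
    (hgm : Measurable g) (hg : MemLp g 2 μ)
    (hgvar : var μ g = σ ^ 2 / (B : ℝ))
    (hmm : Measurable m)
    (hm01 : ∀ ω, m ω = 0 ∨ m ω = 1)
    (hmp : μ {ω | m ω = 1} = ENNReal.ofReal p)
    (hind : IndepFun m g μ)
    (phat : ℝ) (hphat0 : 0 < phat) (hphatp : phat ≤ p) :
    var μ (fun ω => (m ω / p) * g ω)
      ≤ σ ^ 2 / (phat * (B : ℝ)) + ((1 - phat) / phat) * (∫ ω, g ω ∂μ) ^ 2 := by
  have hs : MeasurableSet {ω | m ω = 1} := hmm (measurableSet_singleton 1)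
  have hm_ind : m = Set.indicator {ω | m ω = 1} (fun _ => (1:ℝ)) := by
    funext ω
    rcases hm01 ω with h | h
    · simp [Set.indicator_apply, h]
    · simp [Set.indicator_apply, h]
  have hEm : ∫ ω, m ω ∂μ = p := by
    rw [show (fun ω => m ω) = m from rfl, hm_ind, integral_indicator_const (1:ℝ) hs, measureReal_def, hmp,
      ENNReal.toReal_ofReal hp0.le, smul_eq_mul, mul_one]
  have hmsq : ∀ ω, m ω ^ 2 = m ω := fun ω => by rcases hm01 ω with h | h <;> simp [h]
  have hind2 : IndepFun m (fun ω => g ω ^ 2) μ :=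
    hind.comp measurable_id (measurable_id.pow_const 2)
  have hgint : Integrable g μ := hg.integrable one_le_two
  have hg2int : Integrable (fun ω => g ω ^ 2) μ := by
    have := hg.integrable_sq
    simpa [pow_two] using this
  have h1 : ∫ ω, m ω * g ω ∂μ = p * ∫ ω, g ω ∂μ := by
    have := hind.integral_mul_eq_mul_integral hmm.aestronglyMeasurable hgm.aestronglyMeasurable
    simpa [hEm, Pi.mul_apply] using this
  have h2 : ∫ ω, m ω * g ω ^ 2 ∂μ = p * ∫ ω, g ω ^ 2 ∂μ := by
    have := hind2.integral_mul_eq_mul_integral hmm.aestronglyMeasurable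
      (hgm.pow_const 2).aestronglyMeasurable
    simpa [hEm, Pi.mul_apply] using this
  set a := ∫ ω, g ω ∂μ with ha
  set E2 := ∫ ω, g ω ^ 2 ∂μ with hE2
  have hE2eq : E2 = σ ^ 2 / (B : ℝ) + a ^ 2 := by
    have : E2 - a ^ 2 = σ ^ 2 / (B : ℝ) := hgvar
    linarith
  have hsq : ∫ ω, ((m ω / p) * g ω) ^ 2 ∂μ = p⁻¹ * E2 := by
    have key : (fun ω => ((m ω / p) * g ω) ^ 2)
        = fun ω => p⁻¹ ^ 2 * (m ω * g ω ^ 2) := by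
      funext ω
      rw [mul_pow, div_pow, hmsq ω]
      ring
    rw [key, integral_const_mul, h2]
    field_simp
  have hmean : ∫ ω, (m ω / p) * g ω ∂μ = a := by
    have key : (fun ω => (m ω / p) * g ω) = fun ω => p⁻¹ * (m ω * g ω) := by
      funext ω; ring
    rw [key, integral_const_mul, h1]
    field_simp
  have hvar : var μ (fun ω => (m ω / p) * g ω)
      = σ ^ 2 / (p * (B : ℝ)) + (1 / p - 1) * a ^ 2 := by
    rw [var, hsq, hmean, hE2eq]
    have hB' : (0:ℝ) < B := Nat.cast_pos.2 hB
    field_simp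
    ring
  have hkey : (1 - phat) / phat = 1 / phat - 1 := by field_simp
  rw [hvar, hkey]
  have hB' : (0:ℝ) < B := Nat.cast_pos.2 hB
  gcongr
end

section
/- Let (Ω, P) be a probability space and k a positive natural number. For each i ∈ Fin k, let gᵢ : Ω → ℝ be a square-integrable random variable with E[gᵢ] = μᵢ and Var[gᵢ] = σ²/B for a real σ ≥ 0 and positive natural number B, and let mᵢ : Ω → ℝ be a random variable taking values in {0,1} with P(mᵢ = 1) = pᵢ for reals 0 < pᵢ ≤ 1. Assume the family {g₁, …, g_k, m₁, …, m_k} is mutually independent, and set g̃ᵢ := (mᵢ/pᵢ)·gᵢ. Let p̂ := minᵢ pᵢ. Then the covariance matrix Σ of (g̃₁, …, g̃_k), i.e., the k × k matrix with entries Σᵢⱼ = Cov(g̃ᵢ, g̃ⱼ), is the diagonal matrix with diagonal entries Var[g̃ᵢ], and its Frobenius norm satisfies ‖Σ‖_F ≤ ‖D‖_F, where D is the diagonal k × k matrix with diagonal entries σ²/(p̂·B) + ((1 − p̂)/p̂)·μᵢ². -/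
open MeasureTheory ProbabilityTheory

/-- The Frobenius norm `‖A‖_F = √(∑ᵢⱼ Aᵢⱼ²)` of a square real matrix. -/
noncomputable def frobeniusNorm {k : ℕ} (A : Matrix (Fin k) (Fin k) ℝ) : ℝ :=
  Real.sqrt (∑ i, ∑ j, (A i j) ^ 2)

lemma frob_diag_sum {k : ℕ} (d : Fin k → ℝ) :
    ∑ i, ∑ j, (Matrix.diagonal d i j) ^ 2 = ∑ i, (d i) ^ 2 := by
  refine Finset.sum_congr rfl fun i _ => ?_
  rw [Finset.sum_eq_single i]
  · rw [Matrix.diagonal_apply_eq]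
  · intro j _ hji
    rw [Matrix.diagonal_apply_ne d (Ne.symm hji)]; ring
  · intro h; exact absurd (Finset.mem_univ i) h

/-- Covariance bound of the paper's Corollary: with gradient coordinates `gᵢ` of mean
`μᵢ` and variance `σ²/B`, Bernoulli masks `mᵢ` of parameters `pᵢ > 0`, the whole family
mutually independent, and `g̃ᵢ = (mᵢ/pᵢ) gᵢ`, the covariance matrix `Σ` of `g̃` is the
diagonal matrix of the variances `Var[g̃ᵢ]`, and `‖Σ‖_F ≤ ‖D‖_F` where `D` is the
diagonal matrix with entries `σ²/(p̂ B) + ((1-p̂)/p̂) μᵢ²` and `p̂ = minᵢ pᵢ`. -/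
theorem masked_gradient_covariance_bound {Ω : Type*} [MeasurableSpace Ω]
    (μ : Measure Ω) [IsProbabilityMeasure μ]
    (k : ℕ) (hk : 0 < k) (g m : Fin k → Ω → ℝ)
    (μv : Fin k → ℝ) (σ : ℝ) (hσ : 0 ≤ σ) (B : ℕ) (hB : 0 < B)
    (p : Fin k → ℝ) (hp0 : ∀ i, 0 < p i) (hp1 : ∀ i, p i ≤ 1)
    (hgm : ∀ i, Measurable (g i)) (hg : ∀ i, MemLp (g i) 2 μ)
    (hgmean : ∀ i, ∫ ω, g i ω ∂μ = μv i)
    (hgvar : ∀ i, var μ (g i) = σ ^ 2 / (B : ℝ))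
    (hmm : ∀ i, Measurable (m i))
    (hm01 : ∀ i ω, m i ω = 0 ∨ m i ω = 1)
    (hmp : ∀ i, μ {ω | m i ω = 1} = ENNReal.ofReal (p i))
    (hind : iIndepFun (m := fun _ : Fin k ⊕ Fin k => Real.measurableSpace)
      (Sum.elim g m) μ)
    (gmask : Fin k → Ω → ℝ)
    (hgmask : ∀ i ω, gmask i ω = (m i ω / p i) * g i ω)
    (phat : ℝ)
    (hphat : phat = Finset.univ.inf' (Finset.univ_nonempty_iff.mpr ⟨⟨0, hk⟩⟩) p)
    (Smat : Matrix (Fin k) (Fin k) ℝ)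
    (hS : ∀ i j, Smat i j = cov μ (gmask i) (gmask j)) :
    Smat = Matrix.diagonal (fun i => var μ (gmask i))
      ∧ frobeniusNorm Smat
        ≤ frobeniusNorm (Matrix.diagonal
            (fun i => σ ^ 2 / (phat * (B : ℝ)) + ((1 - phat) / phat) * (μv i) ^ 2)) := by
  have hpne : (Finset.univ : Finset (Fin k)).Nonempty :=
    Finset.univ_nonempty_iff.mpr ⟨⟨0, hk⟩⟩
  have hphat_le : ∀ i, phat ≤ p i := fun i => by
    rw [hphat]; exact Finset.inf'_le p (Finset.mem_univ i)
  have hphat_pos : 0 < phat := by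
    obtain ⟨i, _, hi⟩ := Finset.exists_mem_eq_inf' hpne p
    rw [hphat, hi]; exact hp0 i
  have hphat_le1 : phat ≤ 1 := (hphat_le ⟨0, hk⟩).trans (hp1 _)
  have hBpos : (0 : ℝ) < B := Nat.cast_pos.mpr hB
  -- measurability of the family
  have hfm : ∀ s : Fin k ⊕ Fin k, Measurable (Sum.elim g m s) := by
    rintro (i | i); exacts [hgm i, hmm i]
  -- m as indicator
  have hms : ∀ i, MeasurableSet {ω | m i ω = 1} := fun i =>
    hmm i (measurableSet_singleton 1)
  have hmeq : ∀ i, m i = Set.indicator {ω | m i ω = 1} 1 := by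
    intro i; funext ω
    rcases hm01 i ω with h | h <;>
      simp [Set.indicator_apply, Set.mem_setOf_eq, h]
  have hmint : ∀ i, Integrable (m i) μ := fun i => by
    rw [hmeq i]; exact (integrable_const (1 : ℝ)).indicator (hms i)
  have Em : ∀ i, ∫ ω, m i ω ∂μ = p i := by
    intro i
    have h1 : ∫ ω, m i ω ∂μ = ∫ ω, Set.indicator {ω | m i ω = 1} 1 ω ∂μ := by
      rw [← hmeq i]
    rw [h1, integral_indicator_one (hms i), measureReal_def, hmp i, ENNReal.toReal_ofReal (hp0 i).le]
  -- integrability of g, g²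
  have hgint : ∀ i, Integrable (g i) μ := fun i => (hg i).integrable (by norm_num)
  have hgsq : ∀ i, Integrable (fun ω => g i ω ^ 2) μ := fun i => (hg i).integrable_sq
  -- independence of m i and g i (and g i ^ 2)
  have indep_mg : ∀ i, IndepFun (m i) (g i) μ := fun i =>
    hind.indepFun (show (Sum.inr i : Fin k ⊕ Fin k) ≠ Sum.inl i by simp)
  have indep_mg2 : ∀ i, IndepFun (m i) (fun ω => g i ω ^ 2) μ := fun i =>
    (indep_mg i).comp measurable_id (measurable_id.pow_const 2)
  have Emg : ∀ i, ∫ ω, m i ω * g i ω ∂μ = p i * μv i := by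
    intro i
    have h : ∫ ω, m i ω * g i ω ∂μ = (∫ ω, m i ω ∂μ) * ∫ ω, g i ω ∂μ :=
      (indep_mg i).integral_fun_mul_eq_mul_integral (hmint i).aestronglyMeasurable (hgint i).aestronglyMeasurable
    rw [h, Em i, hgmean i]
  have hmgsqint : ∀ i, Integrable (fun ω => m i ω * g i ω ^ 2) μ := fun i =>
    (hgsq i).bdd_mul (c := 1) (hmm i).aestronglyMeasurable
      (ae_of_all _ fun ω => by rcases hm01 i ω with h | h <;> simp [h])
  have Emg2 : ∀ i, ∫ ω, m i ω * g i ω ^ 2 ∂μ = p i * ∫ ω, g i ω ^ 2 ∂μ := by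
    intro i
    have h : ∫ ω, m i ω * g i ω ^ 2 ∂μ = (∫ ω, m i ω ∂μ) * ∫ ω, g i ω ^ 2 ∂μ :=
      (indep_mg2 i).integral_fun_mul_eq_mul_integral (hmint i).aestronglyMeasurable (hgsq i).aestronglyMeasurable
    rw [h, Em i]
  -- mean and second moment of gmask
  have Egmask : ∀ i, ∫ ω, gmask i ω ∂μ = μv i := by
    intro i
    have h1 : ∫ ω, gmask i ω ∂μ = ∫ ω, (1 / p i) * (m i ω * g i ω) ∂μ := by
      congr 1; funext ω; rw [hgmask]; ring
    rw [h1, integral_const_mul, Emg i]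
    rw [one_div, inv_mul_eq_div, mul_comm, mul_div_assoc, div_self (hp0 i).ne', mul_one]
  have Egmasksq : ∀ i, ∫ ω, gmask i ω ^ 2 ∂μ = (1 / p i) * ∫ ω, g i ω ^ 2 ∂μ := by
    intro i
    have h1 : ∫ ω, gmask i ω ^ 2 ∂μ = ∫ ω, (1 / p i ^ 2) * (m i ω * g i ω ^ 2) ∂μ := by
      congr 1; funext ω
      rcases hm01 i ω with h | h <;> rw [hgmask, h] <;> ring
    rw [h1, integral_const_mul, Emg2 i]
    have hpne0 := (hp0 i).ne'
    field_simp
  -- the variance formula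
  have hEg2 : ∀ i, ∫ ω, g i ω ^ 2 ∂μ = σ ^ 2 / B + μv i ^ 2 := by
    intro i
    have h := hgvar i
    unfold var at h
    rw [hgmean i] at h
    linarith
  have Evgmask : ∀ i, var μ (gmask i)
      = σ ^ 2 / (p i * B) + ((1 - p i) / p i) * μv i ^ 2 := by
    intro i
    have hpne0 := (hp0 i).ne'
    have hBne0 : (B : ℝ) ≠ 0 := hBpos.ne'
    unfold var
    rw [Egmasksq i, Egmask i, hEg2 i]
    field_simp
    ring
  -- integrability of gmask
  have hgmaskeq : ∀ i, gmask i = fun ω => (m i ω / p i) * g i ω := fun i =>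
    funext (hgmask i)
  have hgmaskint : ∀ i, Integrable (gmask i) μ := by
    intro i
    rw [hgmaskeq i]
    refine (hgint i).bdd_mul ((hmm i).div_const _).aestronglyMeasurable (c := 1 / p i) (ae_of_all _ fun ω => ?_)
    rcases hm01 i ω with h | h
    · simp [h]; linarith [hp0 i]
    · simp [h, abs_of_pos (hp0 i)]
  -- off-diagonal independence and zero covariance
  have indep_mask : ∀ i j, i ≠ j → IndepFun (gmask i) (gmask j) μ := by
    intro i j hij
    rw [hgmaskeq i, hgmaskeq j]
    have hpair : IndepFun (fun ω => (g i ω, m i ω)) (fun ω => (g j ω, m j ω)) μ :=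
      hind.indepFun_prodMk_prodMk hfm (Sum.inl i) (Sum.inr i) (Sum.inl j) (Sum.inr j)
        (by simp [hij]) (by simp) (by simp) (by simp [hij])
    exact hpair.comp
      (show Measurable (fun q : ℝ × ℝ => (q.2 / p i) * q.1) from
        ((measurable_snd.div_const _).mul measurable_fst))
      (show Measurable (fun q : ℝ × ℝ => (q.2 / p j) * q.1) from
        ((measurable_snd.div_const _).mul measurable_fst))
  have covzero : ∀ i j, i ≠ j → cov μ (gmask i) (gmask j) = 0 := by
    intro i j hij
    unfold cov
    have h : ∫ ω, gmask i ω * gmask j ω ∂μ = (∫ ω, gmask i ω ∂μ) * ∫ ω, gmask j ω ∂μ :=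
      (indep_mask i j hij).integral_fun_mul_eq_mul_integral (hgmaskint i).aestronglyMeasurable (hgmaskint j).aestronglyMeasurable
    rw [h]
    ring
  have hdiagcov : ∀ X : Ω → ℝ, cov μ X X = var μ X := by
    intro X; unfold cov var
    congr 1
    · congr 1; funext ω; ring
    · ring
  -- first conjunct
  have hSd : Smat = Matrix.diagonal (fun i => var μ (gmask i)) := by
    ext i j
    by_cases h : i = j
    · subst h
      rw [hS, Matrix.diagonal_apply_eq, hdiagcov]
    · rw [hS, Matrix.diagonal_apply_ne _ h, covzero i j h]
  refine ⟨hSd, ?_⟩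
  -- second conjunct
  rw [hSd]
  unfold frobeniusNorm
  rw [frob_diag_sum, frob_diag_sum]
  apply Real.sqrt_le_sqrt
  apply Finset.sum_le_sum
  intro i _
  have hvnn : 0 ≤ var μ (gmask i) := by
    rw [Evgmask i]
    have h1 : 0 ≤ σ ^ 2 / (p i * ↑B) := div_nonneg (sq_nonneg σ) (mul_nonneg (hp0 i).le hBpos.le)
    have h2 : 0 ≤ (1 - p i) / p i * μv i ^ 2 := by
      apply mul_nonneg (div_nonneg (by linarith [hp1 i]) (hp0 i).le) (sq_nonneg _)
    linarith
  have hvle : var μ (gmask i)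
      ≤ σ ^ 2 / (phat * B) + ((1 - phat) / phat) * μv i ^ 2 := by
    rw [Evgmask i]
    have h1 : σ ^ 2 / (p i * B) ≤ σ ^ 2 / (phat * B) := by
      exact div_le_div_of_nonneg_left (by positivity) (mul_pos hphat_pos hBpos)
        (mul_le_mul_of_nonneg_right (hphat_le i) hBpos.le)
    have h2 : (1 - p i) / p i * μv i ^ 2 ≤ (1 - phat) / phat * μv i ^ 2 := by
      apply mul_le_mul_of_nonneg_right _ (sq_nonneg _)
      apply div_le_div₀ (by linarith) (by linarith [hphat_le i]) hphat_pos (hphat_le i)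
    linarith
  exact pow_le_pow_left₀ hvnn hvle 2
end

section
/- Let (Ω, P) be a probability space and k a positive natural number. For each i ∈ Fin k, let gᵢ : Ω → ℝ be a square-integrable random variable and mᵢ : Ω → ℝ a random variable taking values in {0,1} with P(mᵢ = 1) = pᵢ for reals 0 < pᵢ ≤ 1, and assume the family {g₁, …, g_k, m₁, …, m_k} is mutually independent. Set g̃ᵢ := (mᵢ/pᵢ)·gᵢ. Then the covariance matrix of (g̃₁, …, g̃_k) is diagonal with entries Cov(g̃ᵢ, g̃ᵢ) = Var[gᵢ]/pᵢ + ((1 − pᵢ)/pᵢ)·(E[gᵢ])², and Cov(g̃ᵢ, g̃ⱼ) = 0 for i ≠ j. -/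
open MeasureTheory ProbabilityTheory

/-- Exact covariance structure of the masked gradient estimator: with square-integrable
gradient coordinates `gᵢ`, Bernoulli masks `mᵢ` of parameters `pᵢ > 0`, the whole family
mutually independent, and `g̃ᵢ = (mᵢ/pᵢ) gᵢ`, the covariance matrix of `g̃` is diagonal
with `Cov(g̃ᵢ, g̃ᵢ) = Var[gᵢ]/pᵢ + ((1-pᵢ)/pᵢ)(E[gᵢ])²` and `Cov(g̃ᵢ, g̃ⱼ) = 0` for
`i ≠ j`. -/
theorem masked_gradient_covariance_structure {Ω : Type*} [MeasurableSpace Ω]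
    (μ : Measure Ω) [IsProbabilityMeasure μ]
    (k : ℕ) (hk : 0 < k) (g m : Fin k → Ω → ℝ)
    (p : Fin k → ℝ) (hp0 : ∀ i, 0 < p i) (hp1 : ∀ i, p i ≤ 1)
    (hgm : ∀ i, Measurable (g i)) (hg : ∀ i, MemLp (g i) 2 μ)
    (hmm : ∀ i, Measurable (m i))
    (hm01 : ∀ i ω, m i ω = 0 ∨ m i ω = 1)
    (hmp : ∀ i, μ {ω | m i ω = 1} = ENNReal.ofReal (p i))
    (hind : iIndepFun (Sum.elim g m) μ)
    (gmask : Fin k → Ω → ℝ)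
    (hgmask : ∀ i ω, gmask i ω = (m i ω / p i) * g i ω) :
    (∀ i, cov μ (gmask i) (gmask i)
        = var μ (g i) / p i + ((1 - p i) / p i) * (∫ ω, g i ω ∂μ) ^ 2)
      ∧ (∀ i j, i ≠ j → cov μ (gmask i) (gmask j) = 0) := by
  -- basic facts about the masks
  have hms : ∀ i, MeasurableSet {ω | m i ω = 1} := fun i => (hmm i) (measurableSet_singleton 1)
  have hmind : ∀ i, m i = Set.indicator {ω | m i ω = 1} (fun _ => (1 : ℝ)) := by
    intro i
    funext ω
    rcases hm01 i ω with h | h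
    · rw [h, Set.indicator_apply]
      simp [Set.mem_setOf_eq, h]
    · rw [h, Set.indicator_apply]
      simp [Set.mem_setOf_eq, h]
  have hmintgr : ∀ i, Integrable (m i) μ := by
    intro i
    rw [hmind i]
    exact (integrable_const (1 : ℝ)).indicator (hms i)
  have hmint : ∀ i, (∫ ω, m i ω ∂μ) = p i := by
    intro i
    have : (∫ ω, m i ω ∂μ) = ∫ ω, Set.indicator {ω | m i ω = 1} (fun _ => (1 : ℝ)) ω ∂μ := by
      rw [← hmind i]
    rw [this, integral_indicator_const (1 : ℝ) (hms i), measureReal_def, hmp i, smul_eq_mul, mul_one,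
      ENNReal.toReal_ofReal (hp0 i).le]
  have hmbdd : ∀ i, ∃ C, ∀ ω, ‖m i ω‖ ≤ C := by
    intro i
    refine ⟨1, fun ω => ?_⟩
    rcases hm01 i ω with h | h <;> simp [h]
  have hgint : ∀ i, Integrable (g i) μ := fun i => (hg i).integrable (by norm_num)
  have hgsqint : ∀ i, Integrable (fun ω => g i ω ^ 2) μ := fun i => (hg i).integrable_sq
  have hmeas : ∀ s : Fin k ⊕ Fin k, Measurable (Sum.elim g m s) := by
    rintro (a | a)
    · exact hgm a
    · exact hmm a
  -- independence of m i and g i (and of m i and (g i)^2)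
  have hindmg : ∀ i, IndepFun (m i) (g i) μ := by
    intro i
    exact hind.indepFun (show (Sum.inr i : Fin k ⊕ Fin k) ≠ Sum.inl i by simp)
  have key1 : ∀ i, (∫ ω, m i ω * g i ω ∂μ) = p i * ∫ ω, g i ω ∂μ := by
    intro i
    have h : integral μ (m i * g i) = p i * ∫ ω, g i ω ∂μ := by
      rw [(hindmg i).integral_mul_eq_mul_integral (hmintgr i).1 (hgint i).1]
      rw [show integral μ (m i) = p i from hmint i]
    exact h
  have key2 : ∀ i, (∫ ω, m i ω * g i ω ^ 2 ∂μ) = p i * ∫ ω, g i ω ^ 2 ∂μ := by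
    intro i
    have hindsq : IndepFun (m i) (fun ω => g i ω ^ 2) μ :=
      (hindmg i).comp measurable_id (measurable_id.pow_const 2)
    have h : integral μ (m i * fun ω => g i ω ^ 2) = p i * ∫ ω, g i ω ^ 2 ∂μ := by
      rw [hindsq.integral_mul_eq_mul_integral (hmintgr i).1 (hgsqint i).1]
      rw [show integral μ (m i) = p i from hmint i]
    exact h
  constructor
  · intro i
    have hpne : p i ≠ 0 := (hp0 i).ne'
    have e1 : (fun ω => gmask i ω * gmask i ω)
        = fun ω => (p i)⁻¹ ^ 2 * (m i ω * g i ω ^ 2) := by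
      funext ω
      rw [hgmask i ω]
      rcases hm01 i ω with h | h <;> rw [h] <;> ring
    have e2 : (fun ω => gmask i ω) = fun ω => (p i)⁻¹ * (m i ω * g i ω) := by
      funext ω
      rw [hgmask i ω]
      ring
    have I1 : (∫ ω, gmask i ω * gmask i ω ∂μ)
        = (p i)⁻¹ ^ 2 * (p i * ∫ ω, g i ω ^ 2 ∂μ) := by
      rw [show (∫ ω, gmask i ω * gmask i ω ∂μ)
          = ∫ ω, (p i)⁻¹ ^ 2 * (m i ω * g i ω ^ 2) ∂μ by rw [← e1],
        integral_const_mul, key2 i]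
    have I2 : (∫ ω, gmask i ω ∂μ) = (p i)⁻¹ * (p i * ∫ ω, g i ω ∂μ) := by
      rw [show (∫ ω, gmask i ω ∂μ) = ∫ ω, (p i)⁻¹ * (m i ω * g i ω) ∂μ by rw [← e2],
        integral_const_mul, key1 i]
    rw [cov, var, I1, I2]
    field_simp
    ring
  · intro i j hij
    have hpine : p i ≠ 0 := (hp0 i).ne'
    have hpjne : p j ≠ 0 := (hp0 j).ne'
    -- independence of m i * g i and m j * g j
    have hindp : IndepFun (m i * g i) (m j * g j) μ := by
      have := hind.indepFun_mul_mul hmeas (Sum.inr i) (Sum.inl i) (Sum.inr j) (Sum.inl j)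
        (by simpa using hij) (by simp) (by simp) (by simpa using hij)
      simpa using this
    have hintmi : Integrable (m i * g i) μ :=
      (hgint i).bdd_mul (hmm i).aestronglyMeasurable (ae_of_all _ (hmbdd i).choose_spec)
    have hintmj : Integrable (m j * g j) μ :=
      (hgint j).bdd_mul (hmm j).aestronglyMeasurable (ae_of_all _ (hmbdd j).choose_spec)
    have hprod : (∫ ω, (m i * g i) ω * (m j * g j) ω ∂μ)
        = (∫ ω, (m i * g i) ω ∂μ) * ∫ ω, (m j * g j) ω ∂μ :=
      hindp.integral_mul_eq_mul_integral hintmi.1 hintmj.1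
    have e1 : (fun ω => gmask i ω * gmask j ω)
        = fun ω => ((p i)⁻¹ * (p j)⁻¹) * ((m i * g i) ω * (m j * g j) ω) := by
      funext ω
      rw [hgmask i ω, hgmask j ω]
      simp only [Pi.mul_apply]
      ring
    have e2 : ∀ l, (fun ω => gmask l ω) = fun ω => (p l)⁻¹ * ((m l * g l) ω) := by
      intro l
      funext ω
      rw [hgmask l ω]
      simp only [Pi.mul_apply]
      ring
    have I1 : (∫ ω, gmask i ω * gmask j ω ∂μ)
        = ((p i)⁻¹ * (p j)⁻¹) * ((∫ ω, (m i * g i) ω ∂μ) * ∫ ω, (m j * g j) ω ∂μ) := by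
      rw [show (∫ ω, gmask i ω * gmask j ω ∂μ)
          = ∫ ω, ((p i)⁻¹ * (p j)⁻¹) * ((m i * g i) ω * (m j * g j) ω) ∂μ by rw [← e1],
        integral_const_mul, hprod]
    have I2 : ∀ l, (∫ ω, gmask l ω ∂μ) = (p l)⁻¹ * ∫ ω, (m l * g l) ω ∂μ := by
      intro l
      rw [show (∫ ω, gmask l ω ∂μ) = ∫ ω, (p l)⁻¹ * ((m l * g l) ω) ∂μ by rw [← e2 l],
        integral_const_mul]
    rw [cov, I1, I2 i, I2 j]
    ring
end
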